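/- Let α ≥ 0 and ϑ > 0. Let f, g : ℝ → ℝ be locally integrable, and let s, u : ℤ → ℝ be event sequences for f and g respectively at threshold ϑ (strictly increasing, unbounded below and above, and satisfying the LIF threshold property). Let E := range(s) ∪ range(u). Then for all real a ≤ b, either no element of E lies in [a,b] and |μ_f((a,b]) − μ_g((a,b])| ≤ 8ϑ, or there exist p, q ∈ E with a ≤ p ≤ q ≤ b such that |μ_f((a,b]) − μ_g((a,b])| ≤ |μ_f((p,q]) − μ_g((p,q])| + 8ϑ. (Pointwise form of the first quasi-isometry inequality for LIF: the full-interval discrepancy is controlled by the discrepancy over event-endpoint intervals up to 8ϑ.) -/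

import Mathlib

open MeasureTheory intervalIntegral

/-- An event sequence for `f` at threshold `ϑ` with leak `α`: a strictly increasing
bi-infinite sequence of times, unbounded below and above, such that between
consecutive events the exponentially weighted integral of `f` stays within the
threshold `ϑ` (LIF threshold property). -/
def IsLIFEventSeq (α ϑ : ℝ) (f : ℝ → ℝ) (s : ℤ → ℝ) : Prop :=
  StrictMono s ∧
    Filter.Tendsto s Filter.atBot Filter.atBot ∧
    Filter.Tendsto s Filter.atTop Filter.atTop ∧
    ∀ k : ℤ, ∀ t ∈ Set.Ioc (s k) (s (k + 1)),
      |∫ τ in (s k)..t, f τ * Real.exp (α * (τ - t))| ≤ ϑ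


private lemma lifaux_intInt {f : ℝ → ℝ} (hf : LocallyIntegrable f volume) (α c r t : ℝ) :
    IntervalIntegrable (fun τ => f τ * Real.exp (α * (τ - c))) volume r t := by
  apply MeasureTheory.IntegrableOn.intervalIntegrable
  exact (hf.integrableOn_isCompact isCompact_uIcc).mul_continuousOn
    (Continuous.continuousOn (by continuity)) isCompact_uIcc

private lemma lifaux_split {f : ℝ → ℝ} (hf : LocallyIntegrable f volume) (α : ℝ) (r m t : ℝ) :
    (∫ τ in r..t, f τ * Real.exp (α * (τ - t))) =
      Real.exp (α * (m - t)) * (∫ τ in r..m, f τ * Real.exp (α * (τ - m))) +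
      ∫ τ in m..t, f τ * Real.exp (α * (τ - t)) := by
  have h1 : (∫ τ in r..m, f τ * Real.exp (α * (τ - t))) =
      Real.exp (α * (m - t)) * ∫ τ in r..m, f τ * Real.exp (α * (τ - m)) := by
    rw [← intervalIntegral.integral_const_mul]
    apply intervalIntegral.integral_congr
    intro τ _
    have h2 : Real.exp (α * (τ - t)) = Real.exp (α * (m - t)) * Real.exp (α * (τ - m)) := by
      rw [← Real.exp_add]; ring_nf
    simp only
    rw [h2]; ring
  rw [← intervalIntegral.integral_add_adjacent_intervals
    (lifaux_intInt hf α t r m) (lifaux_intInt hf α t m t), h1]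

private lemma lifaux_boundA {α ϑ : ℝ} {f : ℝ → ℝ} {s : ℤ → ℝ} (hϑ : 0 < ϑ)
    (hs : IsLIFEventSeq α ϑ f s) {k : ℤ} {t : ℝ} (h1 : s k ≤ t) (h2 : t ≤ s (k + 1)) :
    |∫ τ in (s k)..t, f τ * Real.exp (α * (τ - t))| ≤ ϑ := by
  rcases eq_or_lt_of_le h1 with h | h
  · rw [← h, intervalIntegral.integral_same]; simpa using hϑ.le
  · exact hs.2.2.2 k t ⟨h, h2⟩

private lemma lifaux_boundB {α ϑ : ℝ} {f : ℝ → ℝ} {s : ℤ → ℝ} (hα : 0 ≤ α) (hϑ : 0 < ϑ)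
    (hf : LocallyIntegrable f volume)
    (hs : IsLIFEventSeq α ϑ f s) {k : ℤ} {r t : ℝ}
    (h0 : s k ≤ r) (h1 : r ≤ t) (h2 : t ≤ s (k + 1)) :
    |∫ τ in r..t, f τ * Real.exp (α * (τ - t))| ≤ 2 * ϑ := by
  have key : (∫ τ in r..t, f τ * Real.exp (α * (τ - t))) =
      (∫ τ in (s k)..t, f τ * Real.exp (α * (τ - t))) -
      Real.exp (α * (r - t)) * ∫ τ in (s k)..r, f τ * Real.exp (α * (τ - r)) := by
    rw [lifaux_split hf α (s k) r t]; ring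
  have hA1 := lifaux_boundA hϑ hs (h0.trans h1) h2
  have hA2 := lifaux_boundA hϑ hs h0 (h1.trans h2)
  have hexp : Real.exp (α * (r - t)) ≤ 1 :=
    Real.exp_le_one_iff.mpr (mul_nonpos_of_nonneg_of_nonpos hα (sub_nonpos.mpr h1))
  rw [key]
  have h3 : |Real.exp (α * (r - t)) * ∫ τ in (s k)..r, f τ * Real.exp (α * (τ - r))| ≤ ϑ := by
    rw [abs_mul, abs_of_nonneg (Real.exp_pos _).le]
    calc Real.exp (α * (r - t)) * |∫ τ in (s k)..r, f τ * Real.exp (α * (τ - r))|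
        ≤ 1 * ϑ := mul_le_mul hexp hA2 (abs_nonneg _) zero_le_one
      _ = ϑ := one_mul ϑ
  calc |(∫ τ in (s k)..t, f τ * Real.exp (α * (τ - t))) -
      Real.exp (α * (r - t)) * ∫ τ in (s k)..r, f τ * Real.exp (α * (τ - r))|
      ≤ |∫ τ in (s k)..t, f τ * Real.exp (α * (τ - t))| +
        |Real.exp (α * (r - t)) * ∫ τ in (s k)..r, f τ * Real.exp (α * (τ - r))| :=
        abs_sub _ _
    _ ≤ ϑ + ϑ := add_le_add hA1 h3
    _ = 2 * ϑ := by ring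

private lemma lifaux_greatest_lt {s : ℤ → ℝ}
    (hbot : Filter.Tendsto s Filter.atBot Filter.atBot)
    (htop : Filter.Tendsto s Filter.atTop Filter.atTop) (x : ℝ) :
    ∃ j : ℤ, s j < x ∧ ∀ k : ℤ, s k < x → k ≤ j := by
  classical
  obtain ⟨N, hN⟩ := Filter.eventually_atTop.mp (htop.eventually (Filter.eventually_ge_atTop x))
  obtain ⟨z, hz⟩ := (hbot.eventually (Filter.eventually_lt_atBot x)).exists
  obtain ⟨j, hj1, hj2⟩ := Int.exists_greatest_of_bdd (P := fun k => s k < x)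
    ⟨N, fun k hk => by
      by_contra h
      push_neg at h
      exact absurd (hN k h.le) (not_le.mpr hk)⟩ ⟨z, hz⟩
  exact ⟨j, hj1, hj2⟩

private lemma lifaux_greatest_le {s : ℤ → ℝ}
    (hbot : Filter.Tendsto s Filter.atBot Filter.atBot)
    (htop : Filter.Tendsto s Filter.atTop Filter.atTop) (x : ℝ) :
    ∃ j : ℤ, s j ≤ x ∧ ∀ k : ℤ, s k ≤ x → k ≤ j := by
  classical
  obtain ⟨N, hN⟩ := Filter.eventually_atTop.mp (htop.eventually (Filter.eventually_gt_atTop x))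
  obtain ⟨z, hz⟩ := (hbot.eventually (Filter.eventually_le_atBot x)).exists
  obtain ⟨j, hj1, hj2⟩ := Int.exists_greatest_of_bdd (P := fun k => s k ≤ x)
    ⟨N, fun k hk => by
      by_contra h
      push_neg at h
      exact absurd (hN k h.le) (not_lt.mpr hk)⟩ ⟨z, hz⟩
  exact ⟨j, hj1, hj2⟩

/-- **Pointwise form of the first quasi-isometry inequality for LIF.**
For any interval `(a,b]`, either no event time lies in `[a,b]` and the discrepancy
`|μ_f((a,b]) − μ_g((a,b])|` is at most `8ϑ`, or there are event times
`a ≤ p ≤ q ≤ b` such that the full-interval discrepancy is controlled by the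
discrepancy over `(p,q]` up to the additive constant `8ϑ`. -/
theorem lif_quasi_isometry_pointwise (α ϑ : ℝ) (hα : 0 ≤ α) (hϑ : 0 < ϑ)
    (f g : ℝ → ℝ) (hf : LocallyIntegrable f (volume : Measure ℝ))
    (hg : LocallyIntegrable g (volume : Measure ℝ))
    (s u : ℤ → ℝ) (hs : IsLIFEventSeq α ϑ f s) (hu : IsLIFEventSeq α ϑ g u) :
    ∀ a b : ℝ, a ≤ b →
      ((Set.range s ∪ Set.range u) ∩ Set.Icc a b = ∅ ∧
          |(∫ τ in a..b, f τ * Real.exp (α * (τ - b))) -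
              ∫ τ in a..b, g τ * Real.exp (α * (τ - b))| ≤ 8 * ϑ) ∨
        (∃ p ∈ Set.range s ∪ Set.range u, ∃ q ∈ Set.range s ∪ Set.range u,
          a ≤ p ∧ p ≤ q ∧ q ≤ b ∧
            |(∫ τ in a..b, f τ * Real.exp (α * (τ - b))) -
                ∫ τ in a..b, g τ * Real.exp (α * (τ - b))| ≤
              |(∫ τ in p..q, f τ * Real.exp (α * (τ - q))) -
                  ∫ τ in p..q, g τ * Real.exp (α * (τ - q))| + 8 * ϑ) := by
  intro a b hab
  obtain ⟨js, hjs1, hjs2⟩ := lifaux_greatest_lt hs.2.1 hs.2.2.1 a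
  obtain ⟨ju, hju1, hju2⟩ := lifaux_greatest_lt hu.2.1 hu.2.2.1 a
  have ha_sp : a ≤ s (js + 1) := by
    by_contra h; push_neg at h; exact absurd (hjs2 _ h) (by omega)
  have ha_up : a ≤ u (ju + 1) := by
    by_contra h; push_neg at h; exact absurd (hju2 _ h) (by omega)
  by_cases hE : (Set.range s ∪ Set.range u) ∩ Set.Icc a b = ∅
  · left
    refine ⟨hE, ?_⟩
    have hsb' : b ≤ s (js + 1) := by
      by_contra h; push_neg at h
      have : s (js + 1) ∈ (Set.range s ∪ Set.range u) ∩ Set.Icc a b :=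
        ⟨Or.inl ⟨js + 1, rfl⟩, ha_sp, h.le⟩
      rw [hE] at this; exact this
    have hub' : b ≤ u (ju + 1) := by
      by_contra h; push_neg at h
      have : u (ju + 1) ∈ (Set.range s ∪ Set.range u) ∩ Set.Icc a b :=
        ⟨Or.inr ⟨ju + 1, rfl⟩, ha_up, h.le⟩
      rw [hE] at this; exact this
    have hbf := lifaux_boundB hα hϑ hf hs hjs1.le hab hsb'
    have hbg := lifaux_boundB hα hϑ hg hu hju1.le hab hub'
    calc |(∫ τ in a..b, f τ * Real.exp (α * (τ - b))) -
            ∫ τ in a..b, g τ * Real.exp (α * (τ - b))|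
        ≤ |∫ τ in a..b, f τ * Real.exp (α * (τ - b))| +
          |∫ τ in a..b, g τ * Real.exp (α * (τ - b))| := abs_sub _ _
      _ ≤ 2 * ϑ + 2 * ϑ := add_le_add hbf hbg
      _ ≤ 8 * ϑ := by linarith
  · right
    obtain ⟨x, hxE, hxab⟩ := Set.nonempty_iff_ne_empty.mpr hE
    obtain ⟨ms, hms1, hms2⟩ := lifaux_greatest_le hs.2.1 hs.2.2.1 b
    obtain ⟨mu, hmu1, hmu2⟩ := lifaux_greatest_le hu.2.1 hu.2.2.1 b
    have hb_sm : b < s (ms + 1) := by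
      by_contra h; push_neg at h; exact absurd (hms2 _ h) (by omega)
    have hb_um : b < u (mu + 1) := by
      by_contra h; push_neg at h; exact absurd (hmu2 _ h) (by omega)
    set p := min (s (js + 1)) (u (ju + 1)) with hp_def
    set q := max (s ms) (u mu) with hq_def
    have hp_a : a ≤ p := le_min ha_sp ha_up
    have hq_b : q ≤ b := max_le hms1 hmu1
    have hpx : p ≤ x ∧ x ≤ q := by
      rcases hxE with ⟨k, rfl⟩ | ⟨k, rfl⟩
      · have hk1 : js < k := by
          by_contra h; push_neg at h
          exact absurd hxab.1 (not_le.mpr (lt_of_le_of_lt (hs.1.monotone h) hjs1))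
        have hk2 : k ≤ ms := hms2 _ hxab.2
        exact ⟨(min_le_left _ _).trans (hs.1.monotone (by omega)),
          (hs.1.monotone hk2).trans (le_max_left _ _)⟩
      · have hk1 : ju < k := by
          by_contra h; push_neg at h
          exact absurd hxab.1 (not_le.mpr (lt_of_le_of_lt (hu.1.monotone h) hju1))
        have hk2 : k ≤ mu := hmu2 _ hxab.2
        exact ⟨(min_le_right _ _).trans (hu.1.monotone (by omega)),
          (hu.1.monotone hk2).trans (le_max_right _ _)⟩
    have hpq : p ≤ q := hpx.1.trans hpx.2
    have hpE : p ∈ Set.range s ∪ Set.range u := by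
      rcases min_cases (s (js + 1)) (u (ju + 1)) with ⟨h, _⟩ | ⟨h, _⟩
      · exact Or.inl ⟨js + 1, h.symm⟩
      · exact Or.inr ⟨ju + 1, h.symm⟩
    have hqE : q ∈ Set.range s ∪ Set.range u := by
      rcases max_cases (s ms) (u mu) with ⟨h, _⟩ | ⟨h, _⟩
      · exact Or.inl ⟨ms, h.symm⟩
      · exact Or.inr ⟨mu, h.symm⟩
    refine ⟨p, hpE, q, hqE, hp_a, hpq, hq_b, ?_⟩
    -- bounds on the head and tail pieces
    have hfap : |∫ τ in a..p, f τ * Real.exp (α * (τ - p))| ≤ 2 * ϑ :=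
      lifaux_boundB hα hϑ hf hs hjs1.le hp_a (min_le_left _ _)
    have hgap : |∫ τ in a..p, g τ * Real.exp (α * (τ - p))| ≤ 2 * ϑ :=
      lifaux_boundB hα hϑ hg hu hju1.le hp_a (min_le_right _ _)
    have hfqb : |∫ τ in q..b, f τ * Real.exp (α * (τ - b))| ≤ 2 * ϑ :=
      lifaux_boundB hα hϑ hf hs (le_max_left _ _) hq_b hb_sm.le
    have hgqb : |∫ τ in q..b, g τ * Real.exp (α * (τ - b))| ≤ 2 * ϑ :=
      lifaux_boundB hα hϑ hg hu (le_max_right _ _) hq_b hb_um.le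
    have hFab := lifaux_split hf α a q b
    have hFaq := lifaux_split hf α a p q
    have hGab := lifaux_split hg α a q b
    have hGaq := lifaux_split hg α a p q
    set e2 := Real.exp (α * (q - b)) with he2_def
    set e3 := Real.exp (α * (p - q)) with he3_def
    set Fab := ∫ τ in a..b, f τ * Real.exp (α * (τ - b))
    set Gab := ∫ τ in a..b, g τ * Real.exp (α * (τ - b))
    set Fap := ∫ τ in a..p, f τ * Real.exp (α * (τ - p))
    set Gap := ∫ τ in a..p, g τ * Real.exp (α * (τ - p))
    set Fpq := ∫ τ in p..q, f τ * Real.exp (α * (τ - q))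
    set Gpq := ∫ τ in p..q, g τ * Real.exp (α * (τ - q))
    set Fqb := ∫ τ in q..b, f τ * Real.exp (α * (τ - b))
    set Gqb := ∫ τ in q..b, g τ * Real.exp (α * (τ - b))
    have hF : Fab - Gab = e2 * e3 * (Fap - Gap) + e2 * (Fpq - Gpq) + (Fqb - Gqb) := by
      rw [hFab, hGab, hFaq, hGaq]; ring
    have he2pos : (0:ℝ) < e2 := Real.exp_pos _
    have he3pos : (0:ℝ) < e3 := Real.exp_pos _
    have he2le : e2 ≤ 1 :=
      Real.exp_le_one_iff.mpr (mul_nonpos_of_nonneg_of_nonpos hα (sub_nonpos.mpr hq_b))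
    have he3le : e3 ≤ 1 :=
      Real.exp_le_one_iff.mpr (mul_nonpos_of_nonneg_of_nonpos hα (sub_nonpos.mpr hpq))
    have hd1 : |Fap - Gap| ≤ 4 * ϑ := by
      calc |Fap - Gap| ≤ |Fap| + |Gap| := abs_sub _ _
        _ ≤ 2 * ϑ + 2 * ϑ := add_le_add hfap hgap
        _ = 4 * ϑ := by ring
    have hd3 : |Fqb - Gqb| ≤ 4 * ϑ := by
      calc |Fqb - Gqb| ≤ |Fqb| + |Gqb| := abs_sub _ _
        _ ≤ 2 * ϑ + 2 * ϑ := add_le_add hfqb hgqb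
        _ = 4 * ϑ := by ring
    have he23 : e2 * e3 ≤ 1 := mul_le_one₀ he2le he3pos.le he3le
    have hb1 : |e2 * e3 * (Fap - Gap)| ≤ 4 * ϑ := by
      rw [abs_mul, abs_mul, abs_of_nonneg he2pos.le, abs_of_nonneg he3pos.le]
      calc e2 * e3 * |Fap - Gap| ≤ 1 * |Fap - Gap| :=
            mul_le_mul_of_nonneg_right he23 (abs_nonneg _)
        _ = |Fap - Gap| := one_mul _
        _ ≤ 4 * ϑ := hd1
    have hb2 : |e2 * (Fpq - Gpq)| ≤ |Fpq - Gpq| := by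
      rw [abs_mul, abs_of_nonneg he2pos.le]
      calc e2 * |Fpq - Gpq| ≤ 1 * |Fpq - Gpq| :=
            mul_le_mul_of_nonneg_right he2le (abs_nonneg _)
        _ = |Fpq - Gpq| := one_mul _
    clear hFab hGab hFaq hGaq hfap hgap hfqb hgqb
    clear_value e2 e3 Fab Gab Fap Gap Fpq Gpq Fqb Gqb
    calc |Fab - Gab| = |e2 * e3 * (Fap - Gap) + e2 * (Fpq - Gpq) + (Fqb - Gqb)| := by rw [hF]
      _ ≤ |e2 * e3 * (Fap - Gap) + e2 * (Fpq - Gpq)| + |Fqb - Gqb| := abs_add_le _ _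
      _ ≤ (|e2 * e3 * (Fap - Gap)| + |e2 * (Fpq - Gpq)|) + |Fqb - Gqb| :=
          add_le_add_left (abs_add_le _ _) _
      _ ≤ |Fpq - Gpq| + 8 * ϑ := by linarith
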